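/- Let α, β ∈ ℂ satisfy α⁷ = β⁷ = 1, α ≠ 1 and β ≠ 1. Then 1/((1−α)(1−β)) + 1/((1−α²)(1−β²)) + 1/((1−α⁴)(1−β⁴)) = 1 if and only if β = α³ or α = β³. -/

import Mathlib

/-- Let `α, β ∈ ℂ` satisfy `α⁷ = β⁷ = 1`, `α ≠ 1`, `β ≠ 1`. Then
`1/((1−α)(1−β)) + 1/((1−α²)(1−β²)) + 1/((1−α⁴)(1−β⁴)) = 1`
if and only if `β = α³` or `α = β³`. -/
theorem stmt_16 (α β : ℂ) (hα7 : α ^ 7 = 1) (hβ7 : β ^ 7 = 1)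
    (hα : α ≠ 1) (hβ : β ≠ 1) :
    1 / ((1 - α) * (1 - β)) + 1 / ((1 - α ^ 2) * (1 - β ^ 2)) +
        1 / ((1 - α ^ 4) * (1 - β ^ 4)) = 1 ↔
      β = α ^ 3 ∨ α = β ^ 3 := by
  have hord : orderOf α = 7 := by
    have hdvd : orderOf α ∣ 7 := orderOf_dvd_of_pow_eq_one hα7
    rcases (Nat.Prime.eq_one_or_self_of_dvd (by norm_num) _ hdvd) with h | h
    · exact absurd (orderOf_eq_one_iff.mp h) hα
    · exact h
  have hprim : IsPrimitiveRoot α 7 := hord ▸ IsPrimitiveRoot.orderOf α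
  have hs : α ^ 6 + α ^ 5 + α ^ 4 + α ^ 3 + α ^ 2 + α + 1 = 0 := by
    have h0 : (α - 1) * (α ^ 6 + α ^ 5 + α ^ 4 + α ^ 3 + α ^ 2 + α + 1) = 0 := by
      linear_combination hα7
    rcases mul_eq_zero.mp h0 with h | h
    · exact absurd (by linear_combination h) hα
    · exact h
  have hne : ∀ j : ℕ, ¬ (7 ∣ j) → 1 - α ^ j ≠ 0 := by
    intro j hj h
    exact hj (hprim.dvd_of_pow_eq_one j (by linear_combination -h))
  obtain ⟨i, hi, rfl⟩ := hprim.eq_pow_of_pow_eq_one hβ7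
  have h1 : (1 : ℂ) - α ≠ 0 := by have := hne 1 (by norm_num); rwa [pow_one] at this
  have h2 : (1 : ℂ) - α ^ 2 ≠ 0 := hne 2 (by norm_num)
  have h4 : (1 : ℂ) - α ^ 4 ≠ 0 := hne 4 (by norm_num)
  interval_cases i
  · exact absurd (pow_zero α) hβ
  · -- i = 1
    refine iff_of_false (fun h => ?_) ?_
    · have hb1 : (1 : ℂ) - α ^ 1 ≠ 0 := hne 1 (by norm_num)
      have hb2 : (1 : ℂ) - (α ^ 1) ^ 2 ≠ 0 := by
        have := hne 2 (by norm_num); rwa [show (2:ℕ) = 1*2 by norm_num, pow_mul] at this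
      have hb4 : (1 : ℂ) - (α ^ 1) ^ 4 ≠ 0 := by
        have := hne 4 (by norm_num); rwa [show (4:ℕ) = 1*4 by norm_num, pow_mul] at this
      field_simp at h
      exact absurd (show (1:ℂ) = 0 by
        linear_combination ((1/14) + (1/28) * α + (1/28) * α ^ 2 + (1/28) * α ^ 4 : ℂ) * h +
          ((6/7) + (-11/14) * α + (1/28) * α ^ 3 + (-1/14) * α ^ 4 + (1/14) * α ^ 5 + (-1/28) * α ^ 6 + (3/14) * α ^ 7 + (-1/4) * α ^ 8 + (1/7) * α ^ 9 + (1/28) * α ^ 10 + (-3/28) * α ^ 11 + (1/28) * α ^ 12 : ℂ) * hs) one_ne_zero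
    · rintro (h | h)
      · exact absurd (hprim.pow_inj (by norm_num) (by norm_num) h) (by norm_num)
      · have h' : α ^ 1 = α ^ 3 := by linear_combination h
        exact absurd (hprim.pow_inj (by norm_num) (by norm_num) h') (by norm_num)
  · -- i = 2
    refine iff_of_false (fun h => ?_) ?_
    · have hb2 : (1 : ℂ) - (α ^ 2) ^ 2 ≠ 0 := by
        have := hne 4 (by norm_num); rwa [show (4:ℕ) = 2*2 by norm_num, pow_mul] at this
      have hb4 : (1 : ℂ) - (α ^ 2) ^ 4 ≠ 0 := by
        have := hne 8 (by norm_num); rwa [show (8:ℕ) = 2*4 by norm_num, pow_mul] at this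
      simp only [← pow_mul, Nat.reduceMul] at *
      field_simp at h
      exact absurd (show (1:ℂ) = 0 by
        linear_combination ((3/14) * α ^ 0 + (1/7) * α ^ 1 + (1/14) * α ^ 2 + (1/14) * α ^ 3 : ℂ) * h +
          ((4/7) * α ^ 0 + (-9/14) * α ^ 1 + (1/14) * α ^ 2 + (-1/14) * α ^ 3 + (1/7) * α ^ 4 + (1/7) * α ^ 5 + (1/7) * α ^ 6 + (3/14) * α ^ 7 + (-3/7) * α ^ 8 + (-1/14) * α ^ 11 + (1/14) * α ^ 12 : ℂ) * hs) one_ne_zero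
    · rintro (h | h)
      · exact absurd (hprim.pow_inj (by norm_num) (by norm_num) h) (by norm_num)
      · have h' : α ^ 1 = α ^ 6 := by linear_combination h
        exact absurd (hprim.pow_inj (by norm_num) (by norm_num) h') (by norm_num)
  · -- i = 3
    refine iff_of_true ?_ (Or.inl rfl)
    have hb3 : (1 : ℂ) - α ^ 3 ≠ 0 := hne 3 (by norm_num)
    have hb2 : (1 : ℂ) - (α ^ 3) ^ 2 ≠ 0 := by
      have := hne 6 (by norm_num); rwa [show (6:ℕ) = 3*2 by norm_num, pow_mul] at this
    have hb4 : (1 : ℂ) - (α ^ 3) ^ 4 ≠ 0 := by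
      have := hne 12 (by norm_num); rwa [show (12:ℕ) = 3*4 by norm_num, pow_mul] at this
    simp only [← pow_mul, Nat.reduceMul] at *
    field_simp
    linear_combination ((2) + (-3) * α + (1) * α ^ 4 + (-1) * α ^ 6 + (4) * α ^ 7 + (-3) * α ^ 8 + (-2) * α ^ 10 + (3) * α ^ 11 + (-2) * α ^ 12 + (3) * α ^ 14 + (-2) * α ^ 15 + (2) * α ^ 16 + (-3) * α ^ 17 + (1) * α ^ 18 + (-1) * α ^ 19 + (2) * α ^ 21 + (-1) * α ^ 22 : ℂ) * hs
  · -- i = 4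
    refine iff_of_false (fun h => ?_) ?_
    · have hb4' : (1 : ℂ) - (α ^ 4) ^ 2 ≠ 0 := by
        have := hne 8 (by norm_num); rwa [show (8:ℕ) = 4*2 by norm_num, pow_mul] at this
      have hb4'' : (1 : ℂ) - (α ^ 4) ^ 4 ≠ 0 := by
        have := hne 16 (by norm_num); rwa [show (16:ℕ) = 4*4 by norm_num, pow_mul] at this
      simp only [← pow_mul, Nat.reduceMul] at *
      field_simp at h
      exact absurd (show (1:ℂ) = 0 by
        linear_combination ((1/7) * α ^ 0 + (1/14) * α ^ 1 + (1/7) * α ^ 2 + (1/14) * α ^ 3 + (1/14) * α ^ 4 : ℂ) * h +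
          ((5/7) * α ^ 0 + (-5/7) * α ^ 1 + (-1/14) * α ^ 2 + (1/7) * α ^ 3 + (1/14) * α ^ 5 + (1/14) * α ^ 6 + (3/7) * α ^ 7 + (-3/7) * α ^ 8 + (-2/7) * α ^ 9 + (1/7) * α ^ 10 + (-1/14) * α ^ 11 + (3/14) * α ^ 12 + (-1/7) * α ^ 13 + (3/7) * α ^ 14 + (-2/7) * α ^ 15 + (-3/14) * α ^ 16 + (1/7) * α ^ 17 + (1/14) * α ^ 19 + (-1/7) * α ^ 20 + (2/7) * α ^ 21 + (-5/14) * α ^ 22 + (1/14) * α ^ 24 + (1/14) * α ^ 26 + (1/14) * α ^ 28 + (-1/14) * α ^ 29 : ℂ) * hs) one_ne_zero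
    · rintro (h | h)
      · exact absurd (hprim.pow_inj (by norm_num) (by norm_num) h) (by norm_num)
      · have h' : α ^ 1 = α ^ 5 := by linear_combination h + α ^ 5 * hα7
        exact absurd (hprim.pow_inj (by norm_num) (by norm_num) h') (by norm_num)
  · -- i = 5
    refine iff_of_true ?_ (Or.inr (by linear_combination (-α ^ 8 - α) * hα7))
    have hb5 : (1 : ℂ) - α ^ 5 ≠ 0 := hne 5 (by norm_num)
    have hb2 : (1 : ℂ) - (α ^ 5) ^ 2 ≠ 0 := by
      have := hne 10 (by norm_num); rwa [show (10:ℕ) = 5*2 by norm_num, pow_mul] at this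
    have hb4 : (1 : ℂ) - (α ^ 5) ^ 4 ≠ 0 := by
      have := hne 20 (by norm_num); rwa [show (20:ℕ) = 5*4 by norm_num, pow_mul] at this
    simp only [← pow_mul, Nat.reduceMul] at *
    field_simp
    linear_combination ((2) + (-3) * α + (1) * α ^ 3 + (-1) * α ^ 4 + (2) * α ^ 6 + (2) * α ^ 7 + (-4) * α ^ 8 + (1) * α ^ 11 + (-1) * α ^ 12 + (2) * α ^ 13 + (2) * α ^ 14 + (-3) * α ^ 15 + (-1) * α ^ 16 + (-1) * α ^ 17 + (2) * α ^ 18 + (-1) * α ^ 20 + (3) * α ^ 21 + (-1) * α ^ 22 + (-1) * α ^ 23 + (-1) * α ^ 24 + (1) * α ^ 25 + (-1) * α ^ 27 + (2) * α ^ 28 + (-1) * α ^ 30 + (-1) * α ^ 31 + (2) * α ^ 32 + (-2) * α ^ 33 + (2) * α ^ 35 + (-1) * α ^ 36 : ℂ) * hs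
  · -- i = 6
    refine iff_of_false (fun h => ?_) ?_
    · have hb6 : (1 : ℂ) - α ^ 6 ≠ 0 := hne 6 (by norm_num)
      have hb2 : (1 : ℂ) - (α ^ 6) ^ 2 ≠ 0 := by
        have := hne 12 (by norm_num); rwa [show (12:ℕ) = 6*2 by norm_num, pow_mul] at this
      have hb4 : (1 : ℂ) - (α ^ 6) ^ 4 ≠ 0 := by
        have := hne 24 (by norm_num); rwa [show (24:ℕ) = 6*4 by norm_num, pow_mul] at this
      simp only [← pow_mul, Nat.reduceMul] at *
      field_simp at h
      exact absurd (show (1:ℂ) = 0 by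
        linear_combination ((1/7) : ℂ) * h +
          ((5/7) + (-4/7) * α + (-1/7) * α ^ 3 + (1/7) * α ^ 4 + (-1/7) * α ^ 5 + (1/7) * α ^ 6 + (2/7) * α ^ 7 + (-2/7) * α ^ 8 + (-1/7) * α ^ 10 + (1/7) * α ^ 11 + (-1/7) * α ^ 12 + (2/7) * α ^ 13 + (-1/7) * α ^ 15 + (-2/7) * α ^ 17 + (2/7) * α ^ 18 + (1/7) * α ^ 20 + (-2/7) * α ^ 22 + (2/7) * α ^ 23 + (-1/7) * α ^ 24 + (-1/7) * α ^ 25 + (1/7) * α ^ 26 + (-1/7) * α ^ 29 + (2/7) * α ^ 30 + (-3/7) * α ^ 32 + (3/7) * α ^ 33 + (-1/7) * α ^ 34 + (-1/7) * α ^ 37 + (2/7) * α ^ 38 + (-2/7) * α ^ 39 + (2/7) * α ^ 40 + (-2/7) * α ^ 42 + (1/7) * α ^ 43 : ℂ) * hs) one_ne_zero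
    · rintro (h | h)
      · exact absurd (hprim.pow_inj (by norm_num) (by norm_num) h) (by norm_num)
      · have h' : α ^ 1 = α ^ 4 := by linear_combination h + (α ^ 11 + α ^ 4) * hα7
        exact absurd (hprim.pow_inj (by norm_num) (by norm_num) h') (by norm_num)
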